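/- Let a < 0 < b with b = h_l ≥ -a = h_s (or symmetrically), and let Δ : [a,b] → ℝ be defined by Δ(t) = (b/(-a))(t - a) for t ∈ [a,0], Δ(t) = b - t for t ∈ [0,b]. Let Δ₁(t) = Δ(t) - h_l/2. Then ∫_a^b Δ₁(t) dt = 0 and ∫_a^b t² Δ₁(t) dt = -(1/12)(h_s³ h_l + h_l⁴) ≤ -(1/12) h_l⁴. -/

import Mathlib

lemma lin_int (c d p q : ℝ) :
    (∫ t in p..q, (c * t + d)) = c * (q^2 - p^2) / 2 + d * (q - p) := by
  have h1 : IntervalIntegrable (fun t : ℝ => c * t) MeasureTheory.volume p q :=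
    (continuous_const.mul continuous_id).intervalIntegrable _ _
  have h2 : IntervalIntegrable (fun _ : ℝ => d) MeasureTheory.volume p q :=
    intervalIntegrable_const
  rw [intervalIntegral.integral_add h1 h2, intervalIntegral.integral_const_mul,
    integral_id, intervalIntegral.integral_const, smul_eq_mul]
  ring

lemma cub_int (c d p q : ℝ) :
    (∫ t in p..q, (c * t^3 + d * t^2)) = c * (q^4 - p^4) / 4 + d * (q^3 - p^3) / 3 := by
  have h1 : IntervalIntegrable (fun t : ℝ => c * t^3) MeasureTheory.volume p q :=
    (continuous_const.mul (continuous_pow 3)).intervalIntegrable _ _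
  have h2 : IntervalIntegrable (fun t : ℝ => d * t^2) MeasureTheory.volume p q :=
    (continuous_const.mul (continuous_pow 2)).intervalIntegrable _ _
  rw [intervalIntegral.integral_add h1 h2, intervalIntegral.integral_const_mul,
    intervalIntegral.integral_const_mul, integral_pow, integral_pow]
  push_cast
  ring

/-- The 'not a knot' perturbation computation: here `h_l = b = max(b,-a)` and
`h_s = -a = min(b,-a)`. -/
theorem stmt6 (a b : ℝ) (ha : a < 0) (hb : 0 < b) (hba : -a ≤ b)
    (Δ Δ₁ : ℝ → ℝ)
    (hΔ : ∀ t ∈ Set.Icc a b, Δ t = if t ≤ 0 then b / (-a) * (t - a) else b - t)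
    (hΔ₁ : ∀ t ∈ Set.Icc a b, Δ₁ t = Δ t - b / 2) :
    (∫ t in a..b, Δ₁ t) = 0 ∧
    (∫ t in a..b, t^2 * Δ₁ t) = -(1/12) * ((-a)^3 * b + b^4) ∧
    (∫ t in a..b, t^2 * Δ₁ t) ≤ -(1/12) * b^4 := by
  have ha0 : a ≠ 0 := ha.ne
  have ha' : -a ≠ 0 := neg_ne_zero.mpr ha0
  have key : ∀ t ∈ Set.Icc a b, Δ₁ t =
      if t ≤ 0 then b / (-a) * t + b / 2 else b / 2 - t := by
    intro t ht
    rw [hΔ₁ t ht, hΔ t ht]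
    split_ifs with h
    · field_simp
      ring
    · ring
  have keyL : ∀ t ∈ Set.uIcc a 0, Δ₁ t = b / (-a) * t + b / 2 := by
    intro t ht
    rw [Set.uIcc_of_le ha.le] at ht
    rw [key t ⟨ht.1, ht.2.trans hb.le⟩, if_pos ht.2]
  have keyR : ∀ t ∈ Set.uIcc 0 b, Δ₁ t = b / 2 - t := by
    intro t ht
    rw [Set.uIcc_of_le hb.le] at ht
    rcases eq_or_lt_of_le ht.1 with h0 | h0
    · rw [key t ⟨ha.le.trans ht.1, ht.2⟩, ← h0]
      simp
    · rw [key t ⟨ha.le.trans ht.1, ht.2⟩, if_neg (not_le.mpr h0)]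
  have int1 : IntervalIntegrable Δ₁ MeasureTheory.volume a 0 := by
    have c1 : Continuous (fun t : ℝ => b / (-a) * t + b / 2) := by fun_prop
    refine (c1.intervalIntegrable a 0).congr ?_
    intro t ht
    exact (keyL t (Set.uIoc_subset_uIcc ht)).symm
  have int2 : IntervalIntegrable Δ₁ MeasureTheory.volume 0 b := by
    have c1 : Continuous (fun t : ℝ => b / 2 - t) := by fun_prop
    refine (c1.intervalIntegrable 0 b).congr ?_
    intro t ht
    exact (keyR t (Set.uIoc_subset_uIcc ht)).symm
  have int1' : IntervalIntegrable (fun t => t^2 * Δ₁ t) MeasureTheory.volume a 0 := by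
    have c1 : Continuous (fun t : ℝ => t^2 * (b / (-a) * t + b / 2)) := by fun_prop
    refine (c1.intervalIntegrable a 0).congr ?_
    intro t ht
    simp [keyL t (Set.uIoc_subset_uIcc ht)]
  have int2' : IntervalIntegrable (fun t => t^2 * Δ₁ t) MeasureTheory.volume 0 b := by
    have c1 : Continuous (fun t : ℝ => t^2 * (b / 2 - t)) := by fun_prop
    refine (c1.intervalIntegrable 0 b).congr ?_
    intro t ht
    simp [keyR t (Set.uIoc_subset_uIcc ht)]
  have EL : (∫ t in a..0, Δ₁ t) = b / (-a) * (0^2 - a^2) / 2 + b / 2 * (0 - a) := by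
    rw [intervalIntegral.integral_congr keyL, lin_int]
  have ER : (∫ t in (0:ℝ)..b, Δ₁ t) = (-1) * (b^2 - 0^2) / 2 + b / 2 * (b - 0) := by
    rw [intervalIntegral.integral_congr keyR]
    rw [show (fun t : ℝ => b / 2 - t) = fun t : ℝ => (-1) * t + b / 2 by funext t; ring]
    rw [lin_int]
  have EL' : (∫ t in a..0, t^2 * Δ₁ t)
      = b / (-a) * (0^4 - a^4) / 4 + b / 2 * (0^3 - a^3) / 3 := by
    rw [intervalIntegral.integral_congr (fun t ht => by
      show t^2 * Δ₁ t = b / (-a) * t^3 + b / 2 * t^2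
      rw [keyL t ht]; ring : Set.EqOn (fun t => t^2 * Δ₁ t)
        (fun t => (b / (-a)) * t^3 + (b / 2) * t^2) (Set.uIcc a 0))]
    rw [cub_int]
  have ER' : (∫ t in (0:ℝ)..b, t^2 * Δ₁ t)
      = (-1) * (b^4 - 0^4) / 4 + b / 2 * (b^3 - 0^3) / 3 := by
    rw [intervalIntegral.integral_congr (fun t ht => by
      show t^2 * Δ₁ t = (-1) * t^3 + b / 2 * t^2
      rw [keyR t ht]; ring : Set.EqOn (fun t => t^2 * Δ₁ t)
        (fun t => (-1) * t^3 + (b / 2) * t^2) (Set.uIcc 0 b))]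
    rw [cub_int]
  have split1 : (∫ t in a..b, Δ₁ t) = (∫ t in a..0, Δ₁ t) + ∫ t in (0:ℝ)..b, Δ₁ t :=
    (intervalIntegral.integral_add_adjacent_intervals int1 int2).symm
  have split2 : (∫ t in a..b, t^2 * Δ₁ t)
      = (∫ t in a..0, t^2 * Δ₁ t) + ∫ t in (0:ℝ)..b, t^2 * Δ₁ t :=
    (intervalIntegral.integral_add_adjacent_intervals int1' int2').symm
  have val2 : (∫ t in a..b, t^2 * Δ₁ t) = -(1/12) * ((-a)^3 * b + b^4) := by
    rw [split2, EL', ER']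
    field_simp
    ring
  refine ⟨?_, val2, ?_⟩
  · rw [split1, EL, ER]
    field_simp
    ring
  · rw [val2]
    nlinarith [pow_pos (neg_pos.mpr ha) 3, hb]
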